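/- The compression capacity of the model (11;C1,C2;f) equals (C1 + C2) / log 3. That is, the supremum, over all positive integers k and all admissible k-shot codes (φ1, φ2), of the rate k / max(⌈log|Im φ1| / C1⌉, ⌈log|Im φ2| / C2⌉) equals (C1 + C2) / log 3. -/

import Mathlib

/-!
Statement 4: The compression capacity of the model (11;C1,C2;f), where both encoders observe
both sources and the target function is the binary arithmetic sum f(x,y) = x + y, equals
(C1 + C2) / log 3 (logarithm base 2). Encoders are maps with finite image; WLOG into ℕ.
-/

/-- The componentwise integer sum of two binary vectors. -/
def vsum {k : ℕ} (x y : Fin k → Fin 2) : Fin k → ℕ := fun i => (x i : ℕ) + (y i : ℕ)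

/-- The cardinality of the image of an encoding map defined on `A^k × A^k`. -/
def imCard {k : ℕ} (φ : (Fin k → Fin 2) × (Fin k → Fin 2) → ℕ) : ℕ :=
  (Finset.univ.image φ).card

/-- Admissibility for the model (11;C1,C2;f): there is a decoder that recovers `x + y`
with zero error from the encoder outputs `φ1 (x, y)` and `φ2 (x, y)`. -/
def Admissible11 {k : ℕ} (φ1 φ2 : (Fin k → Fin 2) × (Fin k → Fin 2) → ℕ) : Prop :=
  ∃ ψ : ℕ → ℕ → (Fin k → ℕ), ∀ x y : Fin k → Fin 2, ψ (φ1 (x, y)) (φ2 (x, y)) = vsum x y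

/-- The rate of a k-shot code: `k / max(⌈log|Im φ1| / C1⌉, ⌈log|Im φ2| / C2⌉)`,
logarithms in base 2. -/
noncomputable def rate11 (C1 C2 : ℝ) {k : ℕ}
    (φ1 φ2 : (Fin k → Fin 2) × (Fin k → Fin 2) → ℕ) : ℝ :=
  (k : ℝ) /
    ((max ⌈Real.logb 2 (imCard φ1) / C1⌉ ⌈Real.logb 2 (imCard φ2) / C2⌉ : ℤ) : ℝ)

/-! ### Auxiliary lemmas -/

lemma aux_imCard_pos {k : ℕ} (φ : (Fin k → Fin 2) × (Fin k → Fin 2) → ℕ) : 0 < imCard φ :=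
  Finset.card_pos.2 (Finset.univ_nonempty.image φ)

/-- Counting converse: an admissible code must have `3^k` distinguishable output pairs. -/
lemma aux_count {k : ℕ} {φ1 φ2 : (Fin k → Fin 2) × (Fin k → Fin 2) → ℕ}
    (h : Admissible11 φ1 φ2) : 3 ^ k ≤ imCard φ1 * imCard φ2 := by
  classical
  obtain ⟨ψ, hψ⟩ := h
  set g : (Fin k → Fin 3) → (Fin k → Fin 2) × (Fin k → Fin 2) := fun z =>
    (fun i => if (z i : ℕ) = 0 then 0 else 1, fun i => if (z i : ℕ) = 2 then 1 else 0) with hg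
  have hgz : ∀ z : Fin k → Fin 3, vsum (g z).1 (g z).2 = fun i => (z i : ℕ) := by
    intro z; funext i
    have h3 : (z i : ℕ) < 3 := (z i).2
    by_cases h0 : (z i : ℕ) = 0
    · simp [vsum, hg, h0, (Fin.ext h0 : z i = 0)]
    · by_cases h2 : (z i : ℕ) = 2
      · simp [vsum, hg, h0, h2]
        rw [if_neg (fun h => h0 (by simp [h]) : z i ≠ 0)]; rfl
      · have h1 : (z i : ℕ) = 1 := by omega
        simp [vsum, hg, h0, h2, h1]
        rw [if_neg (fun h => h0 (by simp [h]) : z i ≠ 0)]; rfl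
  set F : (Fin k → Fin 3) → ℕ × ℕ := fun z => (φ1 (g z), φ2 (g z)) with hF
  have hinj : Function.Injective F := by
    intro z w hzw
    have h1 : φ1 (g z) = φ1 (g w) := congrArg Prod.fst hzw
    have h2 : φ2 (g z) = φ2 (g w) := congrArg Prod.snd hzw
    have hv : vsum (g z).1 (g z).2 = vsum (g w).1 (g w).2 := by
      rw [← hψ (g z).1 (g z).2, ← hψ (g w).1 (g w).2]
      simp only [Prod.mk.eta]
      rw [h1, h2]
    rw [hgz z, hgz w] at hv
    funext i
    exact Fin.ext (congrFun hv i)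
  have hsub : Finset.univ.image F ⊆
      (Finset.univ.image φ1) ×ˢ (Finset.univ.image φ2) := by
    intro p hp
    simp only [Finset.mem_image] at hp
    obtain ⟨z, -, rfl⟩ := hp
    exact Finset.mem_product.2 ⟨Finset.mem_image_of_mem _ (Finset.mem_univ _),
      Finset.mem_image_of_mem _ (Finset.mem_univ _)⟩
  have hcard1 : (Finset.univ.image F).card = 3 ^ k := by
    rw [Finset.card_image_of_injective _ hinj, Finset.card_univ]
    simp [Fintype.card_fun]
  have := Finset.card_le_card hsub
  rw [hcard1, Finset.card_product] at this
  exact this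

/-- The denominator of the rate of an admissible code with `k ≥ 1` is positive. -/
lemma aux_denom_pos (C1 C2 : ℝ) (hC : C2 ≤ C1) (hC2 : 0 < C2) {k : ℕ} (hk : 0 < k)
    {φ1 φ2 : (Fin k → Fin 2) × (Fin k → Fin 2) → ℕ} (h : Admissible11 φ1 φ2) :
    0 < max ⌈Real.logb 2 (imCard φ1) / C1⌉ ⌈Real.logb 2 (imCard φ2) / C2⌉ := by
  have hC1 : 0 < C1 := lt_of_lt_of_le hC2 hC
  have hcount := aux_count h
  have h2 : 2 ≤ imCard φ1 ∨ 2 ≤ imCard φ2 := by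
    by_contra hcon
    push_neg at hcon
    have h1 : imCard φ1 * imCard φ2 ≤ 1 * 1 :=
      Nat.mul_le_mul (by omega) (by omega)
    have h3 : 3 ≤ 3 ^ k := Nat.le_self_pow hk.ne' 3
    omega
  have haux : ∀ (N : ℕ) (C : ℝ), 0 < C → 2 ≤ N → 0 < ⌈Real.logb 2 (N : ℝ) / C⌉ := by
    intro N C hCpos hN
    have hlog : (1 : ℝ) ≤ Real.logb 2 (N : ℝ) := by
      have h2N : (2 : ℝ) ≤ (N : ℝ) := by exact_mod_cast hN
      calc (1 : ℝ) = Real.logb 2 2 := (Real.logb_self_eq_one (by norm_num)).symm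
        _ ≤ Real.logb 2 (N : ℝ) :=
          Real.logb_le_logb_of_le (by norm_num) (by norm_num) h2N
    exact Int.ceil_pos.2 (div_pos (by linarith) hCpos)
  rcases h2 with h2 | h2
  · exact lt_of_lt_of_le (haux _ _ hC1 h2) (le_max_left _ _)
  · exact lt_of_lt_of_le (haux _ _ hC2 h2) (le_max_right _ _)

/-- Converse: every admissible code has rate at most `(C1+C2)/log 3`. -/
lemma aux_rate_le (C1 C2 : ℝ) (hC : C2 ≤ C1) (hC2 : 0 < C2) {k : ℕ} (hk : 0 < k)
    {φ1 φ2 : (Fin k → Fin 2) × (Fin k → Fin 2) → ℕ} (h : Admissible11 φ1 φ2) :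
    rate11 C1 C2 φ1 φ2 ≤ (C1 + C2) / Real.logb 2 3 := by
  have hC1 : 0 < C1 := lt_of_lt_of_le hC2 hC
  have hL : 0 < Real.logb 2 3 := Real.logb_pos (by norm_num) (by norm_num)
  simp only [rate11]
  set a := ⌈Real.logb 2 (imCard φ1) / C1⌉ with hadef
  set b := ⌈Real.logb 2 (imCard φ2) / C2⌉ with hbdef
  have hm : 0 < max a b := aux_denom_pos C1 C2 hC hC2 hk h
  have hmR : (0 : ℝ) < ((max a b : ℤ) : ℝ) := by exact_mod_cast hm
  have hN1 : (0 : ℝ) < (imCard φ1 : ℝ) := by exact_mod_cast aux_imCard_pos φ1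
  have hN2 : (0 : ℝ) < (imCard φ2 : ℝ) := by exact_mod_cast aux_imCard_pos φ2
  have ha : Real.logb 2 (imCard φ1) ≤ (a : ℝ) * C1 := by
    have h1 := Int.le_ceil (Real.logb 2 (imCard φ1) / C1)
    rw [← hadef] at h1
    rw [div_le_iff₀ hC1] at h1
    exact h1
  have hb : Real.logb 2 (imCard φ2) ≤ (b : ℝ) * C2 := by
    have h1 := Int.le_ceil (Real.logb 2 (imCard φ2) / C2)
    rw [← hbdef] at h1
    rw [div_le_iff₀ hC2] at h1
    exact h1
  have haM : (a : ℝ) ≤ ((max a b : ℤ) : ℝ) := by exact_mod_cast le_max_left a b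
  have hbM : (b : ℝ) ≤ ((max a b : ℤ) : ℝ) := by exact_mod_cast le_max_right a b
  have key : (k : ℝ) * Real.logb 2 3 ≤ ((max a b : ℤ) : ℝ) * (C1 + C2) := by
    have h1 : ((3 : ℝ)) ^ k ≤ (imCard φ1 : ℝ) * (imCard φ2 : ℝ) := by
      have := aux_count h
      have := (Nat.cast_le (α := ℝ)).2 this
      push_cast at this
      exact this
    have h2 : Real.logb 2 ((3 : ℝ) ^ k) ≤
        Real.logb 2 ((imCard φ1 : ℝ) * (imCard φ2 : ℝ)) :=
      Real.logb_le_logb_of_le (by norm_num) (by positivity) h1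
    rw [Real.logb_pow, Real.logb_mul (ne_of_gt hN1) (ne_of_gt hN2)] at h2
    nlinarith [mul_le_mul_of_nonneg_right haM hC1.le, mul_le_mul_of_nonneg_right hbM hC2.le]
  rw [div_le_div_iff₀ hmR hL]
  nlinarith [key]

/-- The `Fin 3`-valued vector associated to a pair of binary vectors. -/
def auxZ {k : ℕ} (p : (Fin k → Fin 2) × (Fin k → Fin 2)) : Fin k → Fin 3 := fun i =>
  ⟨vsum p.1 p.2 i, by
    have h1 := (p.1 i).2
    have h2 := (p.2 i).2
    simp only [vsum]
    omega⟩

/-- Base-3 index of the sum vector. -/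
def auxE {k : ℕ} (p : (Fin k → Fin 2) × (Fin k → Fin 2)) : ℕ :=
  (finFunctionFinEquiv (auxZ p) : ℕ)

lemma auxE_lt {k : ℕ} (p : (Fin k → Fin 2) × (Fin k → Fin 2)) : auxE p < 3 ^ k :=
  (finFunctionFinEquiv (auxZ p)).2

/-- Achievability construction: for each `m` with `m·C2 ≥ 1` there is an admissible code
whose block length is almost `m (C1+C2)/log 3` while both ceilings are at most `m`. -/
lemma aux_construct (C1 C2 : ℝ) (hC : C2 ≤ C1) (hC2 : 0 < C2) (m : ℕ)
    (hm1 : 1 ≤ (m : ℝ) * C2) :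
    ∃ (k : ℕ), 0 < k ∧ ∃ φ1 φ2 : (Fin k → Fin 2) × (Fin k → Fin 2) → ℕ,
      Admissible11 φ1 φ2 ∧
      ((m : ℝ) * (C1 + C2) - 2) / Real.logb 2 3 - 1 ≤ (k : ℝ) ∧
      ⌈Real.logb 2 (imCard φ1) / C1⌉ ≤ (m : ℤ) ∧
      ⌈Real.logb 2 (imCard φ2) / C2⌉ ≤ (m : ℤ) := by
  have hC1 : 0 < C1 := lt_of_lt_of_le hC2 hC
  have hm0 : (0 : ℝ) ≤ (m : ℝ) := Nat.cast_nonneg m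
  have hmC1 : 1 ≤ (m : ℝ) * C1 := le_trans hm1 (by nlinarith)
  have hL : 0 < Real.logb 2 3 := Real.logb_pos (by norm_num) (by norm_num)
  set A1 : ℝ := (2 : ℝ) ^ ((m : ℝ) * C1) with hA1def
  set A2 : ℝ := (2 : ℝ) ^ ((m : ℝ) * C2) with hA2def
  have hA1pos : 0 < A1 := Real.rpow_pos_of_pos (by norm_num) _
  have hA2pos : 0 < A2 := Real.rpow_pos_of_pos (by norm_num) _
  have hA1 : 2 ≤ A1 := by
    calc (2 : ℝ) = 2 ^ (1 : ℝ) := (Real.rpow_one 2).symm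
      _ ≤ A1 := Real.rpow_le_rpow_of_exponent_le (by norm_num) hmC1
  have hA2 : 2 ≤ A2 := by
    calc (2 : ℝ) = 2 ^ (1 : ℝ) := (Real.rpow_one 2).symm
      _ ≤ A2 := Real.rpow_le_rpow_of_exponent_le (by norm_num) hm1
  set N1 := ⌊A1⌋₊ with hN1def
  set N2 := ⌊A2⌋₊ with hN2def
  have hN1ge : 2 ≤ N1 := Nat.le_floor (by exact_mod_cast hA1)
  have hN2ge : 2 ≤ N2 := Nat.le_floor (by exact_mod_cast hA2)
  have hN1le : (N1 : ℝ) ≤ A1 := Nat.floor_le hA1pos.le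
  have hN2le : (N2 : ℝ) ≤ A2 := Nat.floor_le hA2pos.le
  have hN1gt : A1 / 2 ≤ (N1 : ℝ) := by
    have := Nat.lt_floor_add_one A1
    rw [← hN1def] at this
    linarith
  have hN2gt : A2 / 2 ≤ (N2 : ℝ) := by
    have := Nat.lt_floor_add_one A2
    rw [← hN2def] at this
    linarith
  have hN1pos : 0 < N1 := by omega
  set k := Nat.log 3 (N1 * N2) with hkdef
  have hNN : 3 ≤ N1 * N2 := le_trans (by norm_num) (Nat.mul_le_mul hN1ge hN2ge)
  have hk : 0 < k := Nat.log_pos (by norm_num) hNN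
  have h3k : 3 ^ k ≤ N1 * N2 := Nat.pow_log_le_self 3 (by omega)
  have h3k' : N1 * N2 < 3 ^ (k + 1) := Nat.lt_pow_succ_log_self (by norm_num) _
  have h3kpos : 0 < 3 ^ k := Nat.pow_pos (by norm_num)
  -- lower bound on k
  have hklb : ((m : ℝ) * (C1 + C2) - 2) / Real.logb 2 3 - 1 ≤ (k : ℝ) := by
    have e1 : (2 : ℝ) ^ ((m : ℝ) * (C1 + C2) - 2) * (2 : ℝ) ^ (2 : ℝ) = A1 * A2 := by
      rw [hA1def, hA2def, ← Real.rpow_add (by norm_num : (0:ℝ) < 2),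
        ← Real.rpow_add (by norm_num : (0:ℝ) < 2)]
      congr 1
      ring
    have e2 : (2 : ℝ) ^ (2 : ℝ) = 4 := by
      rw [show (2 : ℝ) = ((2 : ℕ) : ℝ) by norm_num, Real.rpow_natCast]
      norm_num
    have hprod : (2 : ℝ) ^ ((m : ℝ) * (C1 + C2) - 2) ≤ (N1 : ℝ) * (N2 : ℝ) := by
      have hmm : (A1 / 2) * (A2 / 2) ≤ (N1 : ℝ) * (N2 : ℝ) :=
        mul_le_mul hN1gt hN2gt (by linarith) (by positivity)
      rw [e2] at e1
      nlinarith
    have h1 : (m : ℝ) * (C1 + C2) - 2 ≤ Real.logb 2 ((N1 : ℝ) * (N2 : ℝ)) := by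
      have := Real.logb_le_logb_of_le (by norm_num : (1:ℝ) < 2)
        (by positivity : (0:ℝ) < (2 : ℝ) ^ ((m : ℝ) * (C1 + C2) - 2)) hprod
      rwa [Real.logb_rpow (by norm_num) (by norm_num)] at this
    have h2 : Real.logb 2 ((N1 : ℝ) * (N2 : ℝ)) ≤ ((k : ℝ) + 1) * Real.logb 2 3 := by
      have hcast : ((N1 : ℝ) * (N2 : ℝ)) ≤ (3 : ℝ) ^ (k + 1) := by
        have := (Nat.cast_le (α := ℝ)).2 h3k'.le
        push_cast at this
        exact this
      have := Real.logb_le_logb_of_le (by norm_num : (1:ℝ) < 2)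
        (by positivity : (0:ℝ) < (N1 : ℝ) * (N2 : ℝ)) hcast
      rw [Real.logb_pow] at this
      push_cast at this
      linarith
    have h3 : (m : ℝ) * (C1 + C2) - 2 ≤ ((k : ℝ) + 1) * Real.logb 2 3 := le_trans h1 h2
    rw [sub_le_iff_le_add, div_le_iff₀ hL]
    linarith
  -- the code
  refine ⟨k, hk, fun p => auxE p % N1, fun p => auxE p / N1, ?_, hklb, ?_, ?_⟩
  · -- admissibility
    refine ⟨fun a b => fun i =>
      ((finFunctionFinEquiv.symm ⟨(b * N1 + a) % 3 ^ k, Nat.mod_lt _ h3kpos⟩ :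
        Fin k → Fin 3) i : ℕ), ?_⟩
    intro x y
    have hn : auxE (x, y) / N1 * N1 + auxE (x, y) % N1 = auxE (x, y) :=
      Nat.div_add_mod' _ _
    have hfin : (⟨(auxE (x, y) / N1 * N1 + auxE (x, y) % N1) % 3 ^ k,
        Nat.mod_lt _ h3kpos⟩ : Fin (3 ^ k)) = finFunctionFinEquiv (auxZ (x, y)) := by
      apply Fin.ext
      simp only [hn]
      rw [Nat.mod_eq_of_lt (auxE_lt (x, y))]
      rfl
    funext i
    show ((finFunctionFinEquiv.symm ⟨(auxE (x, y) / N1 * N1 + auxE (x, y) % N1) % 3 ^ k,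
      Nat.mod_lt _ h3kpos⟩ : Fin k → Fin 3) i : ℕ) = vsum x y i
    rw [hfin, Equiv.symm_apply_apply]
    rfl
  · -- first ceiling bound
    have hsub : Finset.univ.image (fun p : (Fin k → Fin 2) × (Fin k → Fin 2) =>
        auxE p % N1) ⊆ Finset.range N1 := by
      intro t ht
      simp only [Finset.mem_image] at ht
      obtain ⟨p, -, rfl⟩ := ht
      exact Finset.mem_range.2 (Nat.mod_lt _ hN1pos)
    have hcard : imCard (fun p : (Fin k → Fin 2) × (Fin k → Fin 2) => auxE p % N1) ≤ N1 := by
      have := Finset.card_le_card hsub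
      rwa [Finset.card_range] at this
    rw [Int.ceil_le]
    push_cast
    rw [div_le_iff₀ hC1]
    have hpos : (0 : ℝ) < (imCard (fun p : (Fin k → Fin 2) × (Fin k → Fin 2) =>
        auxE p % N1) : ℝ) := by exact_mod_cast aux_imCard_pos _
    calc Real.logb 2 _ ≤ Real.logb 2 (N1 : ℝ) :=
          Real.logb_le_logb_of_le (by norm_num) hpos (by exact_mod_cast hcard)
      _ ≤ Real.logb 2 A1 := Real.logb_le_logb_of_le (by norm_num)
          (by exact_mod_cast hN1pos) hN1le
      _ = (m : ℝ) * C1 := by rw [hA1def]; exact Real.logb_rpow (by norm_num) (by norm_num)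
  · -- second ceiling bound
    have hsub : Finset.univ.image (fun p : (Fin k → Fin 2) × (Fin k → Fin 2) =>
        auxE p / N1) ⊆ Finset.range N2 := by
      intro t ht
      simp only [Finset.mem_image] at ht
      obtain ⟨p, -, rfl⟩ := ht
      refine Finset.mem_range.2 ?_
      rw [Nat.div_lt_iff_lt_mul hN1pos]
      calc auxE p < 3 ^ k := auxE_lt p
        _ ≤ N1 * N2 := h3k
        _ = N2 * N1 := Nat.mul_comm _ _
    have hcard : imCard (fun p : (Fin k → Fin 2) × (Fin k → Fin 2) => auxE p / N1) ≤ N2 := by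
      have := Finset.card_le_card hsub
      rwa [Finset.card_range] at this
    have hN2pos : 0 < N2 := by omega
    rw [Int.ceil_le]
    push_cast
    rw [div_le_iff₀ hC2]
    have hpos : (0 : ℝ) < (imCard (fun p : (Fin k → Fin 2) × (Fin k → Fin 2) =>
        auxE p / N1) : ℝ) := by exact_mod_cast aux_imCard_pos _
    calc Real.logb 2 _ ≤ Real.logb 2 (N2 : ℝ) :=
          Real.logb_le_logb_of_le (by norm_num) hpos (by exact_mod_cast hcard)
      _ ≤ Real.logb 2 A2 := Real.logb_le_logb_of_le (by norm_num)
          (by exact_mod_cast hN2pos) hN2le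
      _ = (m : ℝ) * C2 := by rw [hA2def]; exact Real.logb_rpow (by norm_num) (by norm_num)

theorem capacity_11 (C1 C2 : ℝ) (hC : C2 ≤ C1) (hC2 : 0 < C2) :
    sSup {r : ℝ | ∃ (k : ℕ), 0 < k ∧ ∃ φ1 φ2 : (Fin k → Fin 2) × (Fin k → Fin 2) → ℕ,
      Admissible11 φ1 φ2 ∧ r = rate11 C1 C2 φ1 φ2} = (C1 + C2) / Real.logb 2 3 := by
  have hC1 : 0 < C1 := lt_of_lt_of_le hC2 hC
  have hL : 0 < Real.logb 2 3 := Real.logb_pos (by norm_num) (by norm_num)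
  set T : ℝ := (C1 + C2) / Real.logb 2 3 with hT
  set S : Set ℝ := {r : ℝ | ∃ (k : ℕ), 0 < k ∧
      ∃ φ1 φ2 : (Fin k → Fin 2) × (Fin k → Fin 2) → ℕ,
      Admissible11 φ1 φ2 ∧ r = rate11 C1 C2 φ1 φ2} with hS
  have hub : ∀ r ∈ S, r ≤ T := by
    rintro r hr
    simp only [hS, Set.mem_setOf_eq] at hr
    obtain ⟨k, hk, φ1, φ2, hadm, rfl⟩ := hr
    exact aux_rate_le C1 C2 hC hC2 hk hadm
  have hbdd : BddAbove S := ⟨T, fun r hr => hub r hr⟩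
  -- good elements from the construction
  have hgood : ∀ m : ℕ, 1 ≤ (m : ℝ) * C2 →
      ∃ r ∈ S, ((m : ℝ) * (C1 + C2) - 2) / Real.logb 2 3 - 1 ≤ r * (m : ℝ) := by
    intro m hm
    obtain ⟨k, hk, φ1, φ2, hadm, hklb, hc1, hc2⟩ := aux_construct C1 C2 hC hC2 m hm
    refine ⟨rate11 C1 C2 φ1 φ2, by
      simp only [hS, Set.mem_setOf_eq]
      exact ⟨k, hk, φ1, φ2, hadm, rfl⟩, ?_⟩
    have hmax1 : 0 < max ⌈Real.logb 2 (imCard φ1) / C1⌉ ⌈Real.logb 2 (imCard φ2) / C2⌉ :=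
      aux_denom_pos C1 C2 hC hC2 hk hadm
    have hmaxm : max ⌈Real.logb 2 (imCard φ1) / C1⌉ ⌈Real.logb 2 (imCard φ2) / C2⌉ ≤ (m : ℤ) :=
      max_le hc1 hc2
    have hm0 : (0 : ℝ) < (m : ℝ) := by nlinarith
    have hrate : (k : ℝ) / (m : ℝ) ≤ rate11 C1 C2 φ1 φ2 := by
      simp only [rate11]
      have hc : (0 : ℝ) < ((max ⌈Real.logb 2 (imCard φ1) / C1⌉
          ⌈Real.logb 2 (imCard φ2) / C2⌉ : ℤ) : ℝ) := by exact_mod_cast hmax1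
      have hcm : ((max ⌈Real.logb 2 (imCard φ1) / C1⌉
          ⌈Real.logb 2 (imCard φ2) / C2⌉ : ℤ) : ℝ) ≤ (m : ℝ) := by exact_mod_cast hmaxm
      exact div_le_div_of_nonneg_left (by positivity) hc hcm
    calc ((m : ℝ) * (C1 + C2) - 2) / Real.logb 2 3 - 1 ≤ (k : ℝ) := hklb
      _ = ((k : ℝ) / (m : ℝ)) * (m : ℝ) := by field_simp
      _ ≤ rate11 C1 C2 φ1 φ2 * (m : ℝ) :=
          mul_le_mul_of_nonneg_right hrate hm0.le
  have hne : S.Nonempty := by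
    obtain ⟨m, hm⟩ := exists_nat_gt (1 / C2)
    have hm2 : 1 ≤ (m : ℝ) * C2 := by
      rw [div_lt_iff₀ hC2] at hm
      linarith
    obtain ⟨r, hrS, -⟩ := hgood m hm2
    exact ⟨r, hrS⟩
  apply le_antisymm
  · exact csSup_le hne hub
  · -- T ≤ sSup S
    apply le_of_forall_sub_le
    intro ε hε
    obtain ⟨m, hm⟩ := exists_nat_gt (max (1 / C2) ((2 / Real.logb 2 3 + 1) / ε))
    have hm2 : 1 ≤ (m : ℝ) * C2 := by
      have h1 : 1 / C2 < (m : ℝ) := lt_of_le_of_lt (le_max_left _ _) hm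
      rw [div_lt_iff₀ hC2] at h1
      linarith
    have hm0 : (0 : ℝ) < (m : ℝ) := by nlinarith
    have hεm : 2 / Real.logb 2 3 + 1 < ε * (m : ℝ) := by
      have h1 : (2 / Real.logb 2 3 + 1) / ε < (m : ℝ) := lt_of_le_of_lt (le_max_right _ _) hm
      rw [div_lt_iff₀ hε] at h1
      linarith [mul_comm ε (m : ℝ)]
    obtain ⟨r, hrS, hrge⟩ := hgood m hm2
    have hrs : r ≤ sSup S := le_csSup hbdd hrS
    have key : (T - ε) * (m : ℝ) ≤ r * (m : ℝ) := by
      refine le_trans ?_ hrge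
      rw [hT]
      have e1 : ((m : ℝ) * (C1 + C2) - 2) / Real.logb 2 3 =
          (m : ℝ) * ((C1 + C2) / Real.logb 2 3) - 2 / Real.logb 2 3 := by
        field_simp
      rw [e1]
      nlinarith
    have hTr : T - ε ≤ r := by
      have := mul_le_mul_of_nonneg_right (le_refl ((T - ε))) hm0.le
      nlinarith
    linarith
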